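/- Let L be a linear classifier on {0,1}^d with weights w and threshold t, let x ∈ {0,1}^d, and order the features so that the scores s_i = w_i·(2x_i − 1)·(2L(x) − 1) satisfy s_1 ≥ s_2 ≥ ... ≥ s_d. For 0 ≤ k ≤ d let y^(k) ⊆ x be the partial instance that agrees with x on coordinates 1..k and is undefined elsewhere. Then for all 0 ≤ k ≤ d−1, Pr_{z ∈ comp(y^(k+1))}[L(z) = L(x)] ≥ Pr_{z ∈ comp(y^(k))}[L(z) = L(x)] under the uniform distribution over completions, and Pr_{z ∈ comp(y^(d))}[L(z) = L(x)] = 1. -/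

import Mathlib

/-- Output of the linear classifier with weights `w` and threshold `t` on `z ∈ {0,1}^d`. -/
def linOut {d : ℕ} (w : Fin d → ℚ) (t : ℚ) (z : Fin d → Bool) : Bool :=
  decide (t ≤ ∑ i, w i * (if z i then 1 else 0))

/-- Completions of a partial instance `y ∈ {0,1,⊥}^d`. -/
def completions {d : ℕ} (y : Fin d → Option Bool) : Finset (Fin d → Bool) :=
  Finset.univ.filter (fun z => ∀ i, ∀ b, y i = some b → z i = b)

/-- `Pr_{z ~ U(y)}[L(z) = L(x)]`, uniform over the completions of `y`. -/
def prSame {d : ℕ} (w : Fin d → ℚ) (t : ℚ) (x : Fin d → Bool)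
    (y : Fin d → Option Bool) : ℚ :=
  (((completions y).filter (fun z => linOut w t z = linOut w t x)).card : ℚ)
    / ((completions y).card : ℚ)

/-- Score of feature `i`: `w_i (2x_i - 1)(2L(x) - 1)`. -/
def score {d : ℕ} (w : Fin d → ℚ) (t : ℚ) (x : Fin d → Bool) (i : Fin d) : ℚ :=
  w i * (2 * (if x i then 1 else 0) - 1) * (2 * (if linOut w t x then 1 else 0) - 1)

/-- `y ⊆ x`: the partial instance `y` agrees with `x` on its defined coordinates. -/
def subsetOf {d : ℕ} (y : Fin d → Option Bool) (x : Fin d → Bool) : Prop :=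
  ∀ i, ∀ b, y i = some b → x i = b

/-- `topk x k` is the partial instance defined (agreeing with `x`) exactly on the
first `k` coordinates. -/
def topk {d : ℕ} (x : Fin d → Bool) (k : ℕ) : Fin d → Option Bool :=
  fun i => if (i : ℕ) < k then some (x i) else none

namespace GreedyAux

variable {d : ℕ}

/-- the linear sum -/
def S (w : Fin d → ℚ) (z : Fin d → Bool) : ℚ := ∑ i, w i * (if z i then 1 else 0)

lemma linOut_eq (w : Fin d → ℚ) (t : ℚ) (z : Fin d → Bool) :
    linOut w t z = decide (t ≤ S w z) := rfl

lemma mem_completions_topk {x z : Fin d → Bool} {k : ℕ} :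
    z ∈ completions (topk x k) ↔ ∀ i : Fin d, (i : ℕ) < k → z i = x i := by
  simp only [completions, Finset.mem_filter, Finset.mem_univ, true_and]
  constructor
  · intro h i hi; exact h i (x i) (by simp [topk, hi])
  · intro h i b hb
    by_cases hi : (i:ℕ) < k
    · simp only [topk, if_pos hi, Option.some.injEq] at hb
      rw [h i hi, hb]
    · simp [topk, hi] at hb

lemma x_mem_topk (x : Fin d → Bool) (k : ℕ) : x ∈ completions (topk x k) :=
  mem_completions_topk.mpr (fun _ _ => rfl)

lemma update_mem_topk {x z : Fin d → Bool} {k : ℕ} {ik : Fin d} (hik : (ik : ℕ) = k)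
    (hz : z ∈ completions (topk x k)) (b : Bool) :
    Function.update z ik b ∈ completions (topk x k) := by
  rw [mem_completions_topk] at hz ⊢
  intro i hi
  rw [Function.update_of_ne (fun he => by subst he; omega)]
  exact hz i hi

lemma S_update (w : Fin d → ℚ) (z : Fin d → Bool) (i : Fin d) (b : Bool) :
    S w (Function.update z i b)
      = S w z + w i * ((if b then 1 else 0) - (if z i then 1 else 0)) := by
  unfold S
  rw [← Finset.add_sum_erase _ _ (Finset.mem_univ i),
      ← Finset.add_sum_erase _ (fun j => w j * (if z j then (1:ℚ) else 0)) (Finset.mem_univ i)]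
  rw [Finset.sum_congr rfl
      (fun j hj => by rw [Function.update_of_ne (Finset.ne_of_mem_erase hj)])]
  rw [Function.update_self]
  ring

/-- If the score of coordinate `i` is nonnegative, flipping `z i` to agree with `x`
preserves agreement with `L x`. -/
lemma flip_good {w : Fin d → ℚ} {t : ℚ} {x : Fin d → Bool} {i : Fin d}
    (hs : 0 ≤ score w t x i) {z : Fin d → Bool} (hzi : z i ≠ x i)
    (h : linOut w t z = linOut w t x) :
    linOut w t (Function.update z i (x i)) = linOut w t x := by
  have hz : z i = !(x i) := by
    cases hxi : x i <;> cases hzi2 : z i <;> simp_all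
  have hS : S w (Function.update z i (x i))
      = S w z + w i * (2 * (if x i then 1 else 0) - 1) := by
    rw [S_update, hz]
    cases x i <;> norm_num
  cases hLx : linOut w t x with
  | true =>
    have hsc : 0 ≤ w i * (2 * (if x i then 1 else 0) - 1) := by
      rw [score, hLx] at hs; simpa using hs
    have hz' : t ≤ S w z := by
      rw [linOut_eq, hLx] at h; exact of_decide_eq_true h
    rw [linOut_eq, decide_eq_true_iff, hS]
    linarith
  | false =>
    have hsc : w i * (2 * (if x i then 1 else 0) - 1) ≤ 0 := by
      rw [score, hLx] at hs
      cases hxi : x i <;> simp only [hxi] at hs ⊢ <;> norm_num at hs ⊢ <;> linarith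
    have hz' : ¬ t ≤ S w z := by
      rw [linOut_eq, hLx] at h
      exact of_decide_eq_false h
    rw [linOut_eq, decide_eq_false_iff_not]
    intro hc
    rw [hS] at hc
    exact hz' (by linarith)

/-- If the score of coordinate `ik` (with index `k`) is negative, every completion of
`topk x k` has the same output as `x`. -/
lemma all_same {w : Fin d → ℚ} {t : ℚ} {x : Fin d → Bool}
    (hsorted : ∀ i j : Fin d, i ≤ j → score w t x j ≤ score w t x i)
    {k : ℕ} {ik : Fin d} (hik : (ik : ℕ) = k) (hs : score w t x ik < 0)
    {z : Fin d → Bool} (hz : z ∈ completions (topk x k)) :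
    linOut w t z = linOut w t x := by
  rw [mem_completions_topk] at hz
  have key : S w z - S w x
      = ∑ i, w i * ((if z i then 1 else 0) - (if x i then 1 else 0)) := by
    unfold S; rw [← Finset.sum_sub_distrib]; apply Finset.sum_congr rfl; intro i _; ring
  have hterm : ∀ i : Fin d,
      w i * ((if z i then (1:ℚ) else 0) - (if x i then 1 else 0))
        = if z i = x i then 0 else -(w i * (2 * (if x i then 1 else 0) - 1)) := by
    intro i
    cases hxi : x i <;> cases hzi : z i <;> norm_num
  have hneg : ∀ i : Fin d, z i ≠ x i → score w t x i < 0 := by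
    intro i hi
    refine lt_of_le_of_lt (hsorted ik i ?_) hs
    have : (ik : ℕ) ≤ (i : ℕ) := by
      by_contra hc
      exact hi (hz i (by omega))
    exact this
  cases hLx : linOut w t x with
  | true =>
    have hx' : t ≤ S w x := by
      rw [linOut_eq, decide_eq_true_iff] at hLx; exact hLx
    have : 0 ≤ S w z - S w x := by
      rw [key]
      apply Finset.sum_nonneg
      intro i _
      rw [hterm i]
      by_cases hzi : z i = x i
      · simp [hzi]
      · rw [if_neg hzi]
        have := hneg i hzi
        rw [score, hLx] at this
        simp only [if_pos, mul_one] at this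
        nlinarith
    rw [linOut_eq, decide_eq_true_iff]
    linarith
  | false =>
    have hx' : ¬ t ≤ S w x := by
      rw [linOut_eq, decide_eq_false_iff_not] at hLx; exact hLx
    have : S w z - S w x ≤ 0 := by
      rw [key]
      apply Finset.sum_nonpos
      intro i _
      rw [hterm i]
      by_cases hzi : z i = x i
      · simp [hzi]
      · rw [if_neg hzi]
        have h2 := hneg i hzi
        rw [score, hLx] at h2
        cases hxi : x i <;> simp only [hxi] at h2 ⊢ <;> norm_num at h2 ⊢ <;> linarith
    rw [linOut_eq, decide_eq_false_iff_not]
    intro hc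
    exact hx' (by linarith)

lemma bool_ne {a b : Bool} (h : a ≠ b) : a = !b := by
  cases a <;> cases b <;> simp_all

lemma comp_succ_eq_filter {x : Fin d → Bool} {k : ℕ} {ik : Fin d} (hik : (ik : ℕ) = k) :
    completions (topk x (k+1))
      = (completions (topk x k)).filter (fun z => z ik = x ik) := by
  ext z
  simp only [Finset.mem_filter, mem_completions_topk]
  constructor
  · intro h; exact ⟨fun i hi => h i (by omega), h ik (by omega)⟩
  · rintro ⟨h1, h2⟩ i hi
    by_cases hik2 : (i : ℕ) < k
    · exact h1 i hik2
    · have : i = ik := Fin.ext (by omega)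
      rwa [this]

lemma prSame_eq_one {w : Fin d → ℚ} {t : ℚ} {x : Fin d → Bool} {y : Fin d → Option Bool}
    (hne : (completions y).Nonempty)
    (hall : ∀ z ∈ completions y, linOut w t z = linOut w t x) :
    prSame w t x y = 1 := by
  unfold prSame
  rw [Finset.filter_true_of_mem hall, div_self]
  exact_mod_cast Finset.card_ne_zero.mpr hne

end GreedyAux

theorem greedy_monotone (d : ℕ) (hd : 1 ≤ d) (w : Fin d → ℚ) (t : ℚ) (x : Fin d → Bool)
    (hsorted : ∀ i j : Fin d, i ≤ j → score w t x j ≤ score w t x i) :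
    (∀ k : ℕ, k ≤ d - 1 →
      prSame w t x (topk x k) ≤ prSame w t x (topk x (k + 1))) ∧
    prSame w t x (topk x d) = 1 := by
  open GreedyAux in
  constructor
  · intro k hk
    have hkd : k < d := by omega
    set ik : Fin d := ⟨k, hkd⟩ with hikdef
    have hik : (ik : ℕ) = k := rfl
    by_cases hs : 0 ≤ score w t x ik
    · -- pairing argument
      set c := completions (topk x k) with hc
      set A := c.filter (fun z => z ik = x ik) with hA
      set B := c.filter (fun z => ¬ z ik = x ik) with hB
      have hcompsucc : completions (topk x (k+1)) = A := comp_succ_eq_filter hik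
      have hxA : x ∈ A := by
        rw [hA, Finset.mem_filter]; exact ⟨x_mem_topk x k, rfl⟩
      have hA0 : 0 < A.card := Finset.card_pos.mpr ⟨x, hxA⟩
      -- |B| = |A|
      have hBA : B.card = A.card := by
        refine Finset.card_nbij' (fun z => Function.update z ik (x ik))
            (fun z => Function.update z ik (!(x ik))) ?_ ?_ ?_ ?_
        · intro z hz
          simp only [Finset.mem_coe, hB, Finset.mem_filter] at hz
          rw [Finset.mem_coe, hA, Finset.mem_filter]
          exact ⟨update_mem_topk hik hz.1 _, Function.update_self _ _ _⟩
        · intro z hz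
          simp only [Finset.mem_coe, hA, Finset.mem_filter] at hz
          rw [Finset.mem_coe, hB, Finset.mem_filter]
          refine ⟨update_mem_topk hik hz.1 _, ?_⟩
          simp only [Function.update_self]
          cases x ik <;> simp
        · intro z hz
          simp only [Finset.mem_coe, hB, Finset.mem_filter] at hz
          funext j
          by_cases hj : j = ik
          · subst hj
            simp only [Function.update_self]
            exact (bool_ne hz.2).symm
          · simp only [Function.update_of_ne hj]
        · intro z hz
          simp only [Finset.mem_coe, hA, Finset.mem_filter] at hz
          funext j
          by_cases hj : j = ik
          · subst hj
            simp only [Function.update_self]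
            exact hz.2.symm
          · simp only [Function.update_of_ne hj]
      -- cards add up
      have hcard : A.card + B.card = c.card :=
        Finset.card_filter_add_card_filter_not _
      -- hits
      set q : (Fin d → Bool) → Prop := fun z => linOut w t z = linOut w t x with hq
      have hhits : (A.filter q).card + (B.filter q).card = (c.filter q).card := by
        have e1 : Finset.filter q (Finset.filter (fun z => z ik = x ik) c)
            = Finset.filter (fun z => z ik = x ik) (Finset.filter q c) :=
          Finset.filter_comm _ _ _
        have e2 : Finset.filter q (Finset.filter (fun z => ¬ z ik = x ik) c)
            = Finset.filter (fun z => ¬ z ik = x ik) (Finset.filter q c) :=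
          Finset.filter_comm _ _ _
        rw [hA, hB, e1, e2]
        exact Finset.card_filter_add_card_filter_not _
      -- injection from B-hits to A-hits
      have hinjle : (B.filter q).card ≤ (A.filter q).card := by
        apply Finset.card_le_card_of_injOn (fun z => Function.update z ik (x ik))
        · intro z hz
          rw [Finset.mem_coe, Finset.mem_filter] at hz
          have hz1 := hz.1
          rw [hB, Finset.mem_filter] at hz1
          rw [Finset.mem_coe, Finset.mem_filter, hA, Finset.mem_filter]
          refine ⟨⟨update_mem_topk hik hz1.1 _, Function.update_self _ _ _⟩, ?_⟩
          exact flip_good hs hz1.2 hz.2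
        · intro z hz z' hz' he
          simp only [Finset.mem_coe, Finset.mem_filter, hB] at hz hz'
          funext j
          by_cases hj : j = ik
          · subst hj
            rw [bool_ne hz.1.2, bool_ne hz'.1.2]
          · have := congrFun he j
            simp only [Function.update_of_ne hj] at this
            exact this
      -- arithmetic
      have hc0 : 0 < c.card := by omega
      show ((c.filter q).card : ℚ) / (c.card : ℚ)
          ≤ ((completions (topk x (k+1))).filter q).card / ((completions (topk x (k+1))).card : ℚ)
      rw [hcompsucc]
      rw [div_le_div_iff₀ (by exact_mod_cast hc0) (by exact_mod_cast hA0)]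
      have e1 : (c.filter q).card = (A.filter q).card + (B.filter q).card := hhits.symm
      have e2 : c.card = A.card + A.card := by omega
      rw [e1, e2]
      push_cast
      have hle : ((B.filter q).card : ℚ) ≤ ((A.filter q).card : ℚ) := by exact_mod_cast hinjle
      have hA0' : (0:ℚ) ≤ (A.card : ℚ) := by positivity
      nlinarith [mul_le_mul_of_nonneg_right hle hA0']
    · -- all completions agree with L x
      push_neg at hs
      have hall : ∀ z ∈ completions (topk x k), linOut w t z = linOut w t x :=
        fun z hz => all_same hsorted hik hs hz
      have h1 : prSame w t x (topk x k) = 1 :=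
        prSame_eq_one ⟨x, x_mem_topk x k⟩ hall
      have h2 : prSame w t x (topk x (k+1)) = 1 := by
        apply prSame_eq_one ⟨x, x_mem_topk x (k+1)⟩
        intro z hz
        apply hall
        rw [comp_succ_eq_filter hik] at hz
        exact Finset.mem_of_mem_filter _ hz
      rw [h1, h2]
  · apply GreedyAux.prSame_eq_one ⟨x, GreedyAux.x_mem_topk x d⟩
    intro z hz
    rw [GreedyAux.mem_completions_topk] at hz
    have : z = x := funext (fun i => hz i i.isLt)
    rw [this]
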